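/- For all n ≥ 2, the Catalan number C(n) is not congruent to 1 modulo 8. -/

import Mathlib

open Finset

private lemma odd_one_add_two_pow {k : ℕ} (hk : 1 ≤ k) : Odd (1 + 2^k) := by
  rw [Nat.odd_iff]
  have : 2 ∣ 2^k := dvd_pow_self 2 (by omega)
  omega

-- v2-style uniqueness: 2^b * x = 2^a * y with x,y odd forces b = a, x = y
private lemma pow2_mul_odd_inj {b a x y : ℕ} (h : 2^b * x = 2^a * y)
    (hx : Odd x) (hy : Odd y) : b = a ∧ x = y := by
  induction b generalizing a with
  | zero =>
    cases a with
    | zero => simpa using h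
    | succ a =>
      exfalso
      simp only [pow_zero, one_mul] at h
      have h2 : 2 ∣ x := ⟨2^a * y, by rw [h, pow_succ]; ring⟩
      rw [Nat.odd_iff] at hx; omega
  | succ b ih =>
    cases a with
    | zero =>
      exfalso
      simp only [pow_zero, one_mul] at h
      have h2 : 2 ∣ y := ⟨2^b * x, by rw [← h, pow_succ]; ring⟩
      rw [Nat.odd_iff] at hy; omega
    | succ a =>
      have h' : 2^b * x = 2^a * y := by
        rw [pow_succ, pow_succ] at h
        have : 2 * (2^b * x) = 2 * (2^a * y) := by linarith [h]
        omega
      obtain ⟨h1, h2⟩ := ih h'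
      exact ⟨by omega, h2⟩

private lemma E1 {a b c : ℕ} (h : 2^b + 2^c = 2^a) : b = c ∧ a = c + 1 := by
  rcases lt_trichotomy b c with hbc | rfl | hbc
  · exfalso
    have h' : 2^b * (1 + 2^(c-b)) = 2^a * 1 := by
      rw [mul_one, mul_add, mul_one, ← pow_add, show b + (c - b) = c by omega]; exact h
    have := (pow2_mul_odd_inj h' (odd_one_add_two_pow (by omega)) odd_one).2
    have hp : 0 < (2:ℕ)^(c-b) := by positivity
    omega
  · refine ⟨rfl, ?_⟩
    have h2 : (2:ℕ)^(b+1) = 2^a := by rw [pow_succ]; omega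
    exact (Nat.pow_right_injective (le_refl 2) h2).symm
  · exfalso
    have h' : 2^c * (1 + 2^(b-c)) = 2^a * 1 := by
      rw [mul_one, mul_add, mul_one, ← pow_add, show c + (b - c) = b by omega]; omega
    have := (pow2_mul_odd_inj h' (odd_one_add_two_pow (by omega)) odd_one).2
    have hp : 0 < (2:ℕ)^(b-c) := by positivity
    omega

private lemma E2 {a e b c : ℕ} (hae : a < e) (h : 2^b + 2^c = 2^a + 2^e) :
    (b = a ∧ c = e) ∨ (b = e ∧ c = a) := by
  rcases lt_trichotomy b c with hbc | rfl | hbc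
  · -- b < c : compare 2-adic decompositions
    left
    have h' : 2^b * (1 + 2^(c-b)) = 2^a * (1 + 2^(e-a)) := by
      rw [mul_add, mul_one, ← pow_add, show b + (c - b) = c by omega,
        mul_add, mul_one, ← pow_add, show a + (e - a) = e by omega]
      exact h
    obtain ⟨h1, h2⟩ := pow2_mul_odd_inj h' (odd_one_add_two_pow (by omega))
      (odd_one_add_two_pow (by omega))
    have h3 : (2:ℕ)^(c-b) = 2^(e-a) := by omega
    have h4 := Nat.pow_right_injective (le_refl 2) h3
    exact ⟨h1, by omega⟩
  · exfalso
    have h2 : (2:ℕ)^(b+1) = 2^a + 2^e := by rw [pow_succ]; omega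
    obtain ⟨h3, _⟩ := E1 h2.symm
    omega
  · have h' : 2^c + 2^b = 2^a + 2^e := by omega
    have h'' : 2^c * (1 + 2^(b-c)) = 2^a * (1 + 2^(e-a)) := by
      rw [mul_add, mul_one, ← pow_add, show c + (b - c) = b by omega,
        mul_add, mul_one, ← pow_add, show a + (e - a) = e by omega]
      exact h'
    obtain ⟨h1, h2⟩ := pow2_mul_odd_inj h'' (odd_one_add_two_pow (by omega))
      (odd_one_add_two_pow (by omega))
    have h3 : (2:ℕ)^(b-c) = 2^(e-a) := by omega
    have h4 := Nat.pow_right_injective (le_refl 2) h3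
    right; exact ⟨by omega, h1⟩

private lemma E3 {a b c d : ℕ} (hcd : c < d) (h : 2^b + 2^c + 2^d = 2^a) :
    b = c ∧ d = c + 1 ∧ a = c + 2 := by
  rcases lt_trichotomy b c with hbc | rfl | hbc
  · exfalso
    have h' : 2^b * (1 + (2^(c-b) + 2^(d-b))) = 2^a * 1 := by
      rw [mul_one, mul_add, mul_one, mul_add, ← pow_add, ← pow_add,
        show b + (c - b) = c by omega, show b + (d - b) = d by omega]
      omega
    have hodd : Odd (1 + (2^(c-b) + 2^(d-b))) := by
      rw [Nat.odd_iff]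
      have h1 : 2 ∣ 2^(c-b) := dvd_pow_self 2 (by omega)
      have h2 : 2 ∣ 2^(d-b) := dvd_pow_self 2 (by omega)
      omega
    have := (pow2_mul_odd_inj h' hodd odd_one).2
    have hp : 0 < (2:ℕ)^(c-b) := by positivity
    have hq : 0 < (2:ℕ)^(d-b) := by positivity
    omega
  · -- b = c
    have h2 : (2:ℕ)^(b+1) + 2^d = 2^a := by rw [pow_succ]; omega
    obtain ⟨h3, h4⟩ := E1 h2
    exact ⟨rfl, by omega, by omega⟩
  · -- c < b
    exfalso
    have h' : 2^c * (1 + (2^(b-c) + 2^(d-c))) = 2^a * 1 := by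
      rw [mul_one, mul_add, mul_one, mul_add, ← pow_add, ← pow_add,
        show c + (b - c) = b by omega, show c + (d - c) = d by omega]
      omega
    have hodd : Odd (1 + (2^(b-c) + 2^(d-c))) := by
      rw [Nat.odd_iff]
      have h1 : 2 ∣ 2^(b-c) := dvd_pow_self 2 (by omega)
      have h2 : 2 ∣ 2^(d-c) := dvd_pow_self 2 (by omega)
      omega
    have := (pow2_mul_odd_inj h' hodd odd_one).2
    have hp : 0 < (2:ℕ)^(b-c) := by positivity
    have hq : 0 < (2:ℕ)^(d-c) := by positivity
    omega

private lemma no_pow_between {k b : ℕ} (h1 : 2^k < 2^b) (h2 : 2^b < 2^(k+1)) : False := by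
  have hb : k < b := (Nat.pow_lt_pow_iff_right (by norm_num)).mp h1
  have hb' : b < k + 1 := (Nat.pow_lt_pow_iff_right (by norm_num)).mp h2
  omega

private lemma ico_reflect (f : ℕ → ℕ) (lo n : ℕ) (hlo : lo ≤ n + 1) :
    ∑ i ∈ Finset.Ico lo (n+1), f i = ∑ i ∈ Finset.Ico 0 (n+1-lo), f (n - i) := by
  apply Finset.sum_bij' (i := fun a _ => n - a) (j := fun a _ => n - a)
  · intro a ha
    simp only [Finset.mem_Ico] at ha ⊢
    omega
  · intro a ha
    simp only [Finset.mem_Ico] at ha ⊢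
    omega
  · intro a ha
    simp only [Finset.mem_Ico] at ha
    omega
  · intro a ha
    simp only [Finset.mem_Ico] at ha
    omega
  · intro a ha
    simp only [Finset.mem_Ico] at ha
    congr 1
    omega

private lemma pair_even (f : ℕ → ℕ) (m : ℕ) (h : ∀ i ≤ 2*m, f i = f (2*m - i)) :
    ∑ i ∈ Finset.range (2*m+1), f i = 2 * ∑ i ∈ Finset.range m, f i + f m := by
  have hsplit : ∑ i ∈ Finset.Ico 0 (m+1), f i + ∑ i ∈ Finset.Ico (m+1) (2*m+1), f i
      = ∑ i ∈ Finset.Ico 0 (2*m+1), f i :=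
    Finset.sum_Ico_consecutive f (by omega) (by omega)
  have hrefl := ico_reflect f (m+1) (2*m) (by omega)
  have heq : ∑ i ∈ Finset.Ico 0 (2*m - m), f (2*m - i) = ∑ i ∈ Finset.range m, f i := by
    rw [show 2*m - m = m by omega, ← Finset.range_eq_Ico]
    apply Finset.sum_congr rfl
    intro i hi
    rw [Finset.mem_range] at hi
    exact (h i (by omega)).symm
  rw [← Finset.range_eq_Ico, ← Finset.range_eq_Ico] at hsplit
  rw [show 2*m+1-(m+1) = 2*m - m by omega] at hrefl
  rw [← hsplit, hrefl, heq, Finset.range_eq_Ico (a := m + 1), Finset.sum_Ico_succ_top (by omega),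
    ← Finset.range_eq_Ico]
  ring

private lemma pair_odd (f : ℕ → ℕ) (m : ℕ) (h : ∀ i ≤ 2*m+1, f i = f (2*m+1 - i)) :
    ∑ i ∈ Finset.range (2*m+2), f i = 2 * ∑ i ∈ Finset.range (m+1), f i := by
  have hsplit : ∑ i ∈ Finset.Ico 0 (m+1), f i + ∑ i ∈ Finset.Ico (m+1) (2*m+2), f i
      = ∑ i ∈ Finset.Ico 0 (2*m+2), f i :=
    Finset.sum_Ico_consecutive f (by omega) (by omega)
  have hrefl := ico_reflect f (m+1) (2*m+1) (by omega)
  have heq : ∑ i ∈ Finset.Ico 0 (2*m+2-(m+1)), f (2*m+1 - i) = ∑ i ∈ Finset.range (m+1), f i := by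
    rw [show 2*m+2-(m+1) = m+1 by omega, ← Finset.range_eq_Ico]
    apply Finset.sum_congr rfl
    intro i hi
    rw [Finset.mem_range] at hi
    exact (h i (by omega)).symm
  rw [← Finset.range_eq_Ico, ← Finset.range_eq_Ico] at hsplit
  rw [← hsplit, hrefl, heq, Finset.range_eq_Ico]
  ring

private lemma catalan_succ_range (n : ℕ) :
    catalan (n+1) = ∑ i ∈ Finset.range (n+1), catalan i * catalan (n - i) := by
  rw [catalan_succ]
  exact Fin.sum_univ_eq_sum_range (fun i => catalan i * catalan (n - i)) (n+1)
private lemma cat4 : ∀ n : ℕ,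
    ((∃ a, n + 1 = 2^a) → (catalan n : ZMod 4) = 1) ∧
    ((∃ a b, a < b ∧ n + 1 = 2^a + 2^b) → (catalan n : ZMod 4) = 2) ∧
    ((¬ ∃ a, n + 1 = 2^a) → (¬ ∃ a b, a < b ∧ n + 1 = 2^a + 2^b) →
      (catalan n : ZMod 4) = 0) := by
  intro n
  induction n using Nat.strong_induction_on with
  | _ n ih =>
  match n with
  | 0 =>
    refine ⟨fun _ => by norm_num [catalan_zero], fun h => ?_, fun h _ => ?_⟩
    · obtain ⟨a, b, hab, h⟩ := h
      have ha : 0 < 2^a := Nat.pow_pos (n := a) (by norm_num)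
      have hb : 0 < 2^b := Nat.pow_pos (n := b) (by norm_num)
      omega
    · exact absurd ⟨0, rfl⟩ h
  | (k+1) =>
    -- helpers from the induction hypothesis
    have hP1 : ∀ i ≤ k, (∃ a, i+1 = 2^a) → (catalan i : ZMod 4) = 1 :=
      fun i hi h => (ih i (by omega)).1 h
    have hP2 : ∀ i ≤ k, (∃ a b, a < b ∧ i+1 = 2^a+2^b) → (catalan i : ZMod 4) = 2 :=
      fun i hi h => (ih i (by omega)).2.1 h
    have hP0 : ∀ i ≤ k, (¬ ∃ a, i+1 = 2^a) → (¬ ∃ a b, a < b ∧ i+1 = 2^a+2^b) →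
        (catalan i : ZMod 4) = 0 := fun i hi h h' => (ih i (by omega)).2.2 h h'
    have heven : ∀ i ≤ k, (¬ ∃ a, i+1 = 2^a) → 2 * (catalan i : ZMod 4) = 0 := by
      intro i hi h
      by_cases h2 : ∃ a b, a < b ∧ i+1 = 2^a+2^b
      · rw [hP2 i hi h2]; decide
      · rw [hP0 i hi h h2]; ring
    have hterm : ∀ i ≤ k, (¬ (∃ a, i+1 = 2^a) ∨ ¬ (∃ a, k-i+1 = 2^a)) →
        2 * ((catalan i : ZMod 4) * (catalan (k-i) : ZMod 4)) = 0 := by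
      intro i hi hcase
      rcases hcase with h | h
      · rw [show 2 * ((catalan i : ZMod 4) * (catalan (k-i) : ZMod 4))
          = (2 * (catalan i : ZMod 4)) * (catalan (k-i) : ZMod 4) by ring,
          heven i hi h, zero_mul]
      · rw [show 2 * ((catalan i : ZMod 4) * (catalan (k-i) : ZMod 4))
          = (catalan i : ZMod 4) * (2 * (catalan (k-i) : ZMod 4)) by ring,
          heven (k-i) (by omega) h, mul_zero]
    have hsym : ∀ i ≤ k, catalan i * catalan (k - i)
        = catalan (k - i) * catalan (k - (k - i)) := by
      intro i hi
      rw [show k - (k - i) = i by omega, mul_comm]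
    refine ⟨fun h => ?_, fun h => ?_, fun hnp1 hnp2 => ?_⟩
    -- Case 1 : k + 2 = 2^a, show catalan (k+1) ≡ 1 [mod 4]
    · obtain ⟨a, hA⟩ := h
      have ha1 : 1 ≤ a := by
        by_contra hcon
        have ha0 : a = 0 := by omega
        rw [ha0, pow_zero] at hA
        omega
      have hpow : 2^(a-1) * 2 = 2^a := by
        rw [← pow_succ, show a-1+1 = a by omega]
      set m := 2^(a-1) - 1 with hm
      have hm1 : m + 1 = 2^(a-1) := by
        have : 1 ≤ 2^(a-1) := Nat.one_le_two_pow
        omega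
      have hk : k = 2*m := by omega
      rw [catalan_succ_range, hk]
      rw [pair_even _ m (by rw [← hk]; exact hsym)]
      rw [← hk]
      push_cast
      have hmid : ((catalan m : ZMod 4) * (catalan (k - m) : ZMod 4)) = 1 := by
        rw [show k - m = m by omega, hP1 m (by omega) ⟨a-1, hm1⟩, mul_one]
      rw [hmid]
      have hz : (2 : ZMod 4) * ∑ i ∈ Finset.range m, (catalan i : ZMod 4) * (catalan (k-i) : ZMod 4) = 0 := by
        rw [Finset.mul_sum]
        apply Finset.sum_eq_zero
        intro i hi
        rw [Finset.mem_range] at hi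
        apply hterm i (by omega)
        by_cases hpi : ∃ t, i+1 = 2^t
        · right
          rintro ⟨c, hcc⟩
          obtain ⟨b, hb⟩ := hpi
          have hsum : 2^b + 2^c = 2^a := by omega
          have hbc := (E1 hsum).1
          subst hbc
          omega
        · exact Or.inl hpi
      rw [hz]; ring
    -- Case 2 : k + 2 = 2^a + 2^e with a < e
    · obtain ⟨a, e, hae, hA⟩ := h
      rcases Nat.eq_zero_or_pos a with rfl | ha1
      · -- a = 0 : k is odd
        have he1 : 1 ≤ e := hae
        have hpow : 2^(e-1) * 2 = 2^e := by rw [← pow_succ, show e-1+1 = e by omega]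
        set m := 2^(e-1) - 1 with hm
        have hm1 : m + 1 = 2^(e-1) := by
          have : 1 ≤ 2^(e-1) := Nat.one_le_two_pow
          omega
        have hk : k = 2*m+1 := by simp at hA; omega
        rw [catalan_succ_range, hk]
        rw [pair_odd _ m (by rw [← hk]; exact hsym)]
        rw [← hk]
        push_cast
        rw [Finset.mul_sum]
        rw [Finset.sum_eq_single_of_mem 0 (Finset.mem_range.mpr (by omega))]
        · rw [show k - 0 = k by omega, catalan_zero]
          have : (catalan k : ZMod 4) = 1 := hP1 k (le_refl k) ⟨e, by omega⟩
          rw [this]; norm_num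
        · intro i hi hne
          rw [Finset.mem_range] at hi
          apply hterm i (by omega)
          by_cases hpi : ∃ t, i+1 = 2^t
          · right
            rintro ⟨c, hcc⟩
            obtain ⟨b, hb⟩ := hpi
            have hsum : 2^b + 2^c = 2^0 + 2^e := by simp; omega
            rcases E2 hae hsum with ⟨h1, h2⟩ | ⟨h1, h2⟩
            · rw [h1, pow_zero] at hb
              exact hne (by omega)
            · rw [h1] at hb
              omega
          · exact Or.inl hpi
      · -- a ≥ 1 : k is even
        have hpa : 2^(a-1) * 2 = 2^a := by rw [← pow_succ, show a-1+1 = a by omega]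
        have hpe : 2^(e-1) * 2 = 2^e := by rw [← pow_succ, show e-1+1 = e by omega]
        have hlt : (2:ℕ)^(a-1) < 2^(e-1) := Nat.pow_lt_pow_right (by norm_num) (by omega)
        set m := 2^(a-1) + 2^(e-1) - 1 with hm
        have hm1 : m + 1 = 2^(a-1) + 2^(e-1) := by
          have : 1 ≤ 2^(a-1) := Nat.one_le_two_pow
          omega
        have hk : k = 2*m := by omega
        set i₀ := 2^a - 1 with hi₀
        have hi₀1 : i₀ + 1 = 2^a := by
          have : 1 ≤ 2^a := Nat.one_le_two_pow
          omega
        have hi₀m : i₀ < m := by omega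
        rw [catalan_succ_range, hk]
        rw [pair_even _ m (by rw [← hk]; exact hsym)]
        rw [← hk]
        push_cast
        have hmid : ((catalan m : ZMod 4) * (catalan (k - m) : ZMod 4)) = 0 := by
          rw [show k - m = m by omega,
            hP2 m (by omega) ⟨a-1, e-1, by omega, hm1⟩]
          decide
        rw [hmid, Finset.mul_sum]
        rw [Finset.sum_eq_single_of_mem i₀ (Finset.mem_range.mpr hi₀m)]
        · have h1 : (catalan i₀ : ZMod 4) = 1 := hP1 i₀ (by omega) ⟨a, hi₀1⟩
          have h2 : (catalan (k - i₀) : ZMod 4) = 1 :=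
            hP1 (k - i₀) (by omega) ⟨e, by omega⟩
          rw [h1, h2]; norm_num
        · intro i hi hne
          rw [Finset.mem_range] at hi
          apply hterm i (by omega)
          by_cases hpi : ∃ t, i+1 = 2^t
          · right
            rintro ⟨c, hcc⟩
            obtain ⟨b, hb⟩ := hpi
            have hsum : 2^b + 2^c = 2^a + 2^e := by omega
            rcases E2 hae hsum with ⟨h1, h2⟩ | ⟨h1, h2⟩
            · rw [h1] at hb
              exact hne (by omega)
            · rw [h1] at hb
              omega
          · exact Or.inl hpi
    -- Case 3 : neither, show ≡ 0
    · have hboth : ∀ i ≤ k, ¬ (∃ t, i+1 = 2^t) ∨ ¬ (∃ t, k-i+1 = 2^t) := by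
        intro i hi
        by_cases hpi : ∃ t, i+1 = 2^t
        · right
          rintro ⟨c, hcc⟩
          obtain ⟨b, hb⟩ := hpi
          have hsum : 2^b + 2^c = k + 2 := by omega
          rcases lt_trichotomy b c with h | h | h
          · exact hnp2 ⟨b, c, h, hsum.symm⟩
          · subst h
            apply hnp1
            exact ⟨b+1, by rw [pow_succ]; omega⟩
          · exact hnp2 ⟨c, b, h, by omega⟩
        · exact Or.inl hpi
      rcases Nat.even_or_odd k with ⟨m, hk⟩ | ⟨m, hk⟩
      · have hk' : k = 2*m := by omega
        rw [catalan_succ_range, hk']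
        rw [pair_even _ m (by rw [← hk']; exact hsym)]
        rw [← hk']
        push_cast
        have hmid : ((catalan m : ZMod 4) * (catalan (k - m) : ZMod 4)) = 0 := by
          rw [show k - m = m by omega]
          have hnpm : ¬ ∃ t, m + 1 = 2^t := by
            rintro ⟨t, ht⟩
            exact hnp1 ⟨t+1, by rw [pow_succ]; omega⟩
          by_cases h2 : ∃ a b, a < b ∧ m+1 = 2^a+2^b
          · rw [hP2 m (by omega) h2]; decide
          · rw [hP0 m (by omega) hnpm h2]; ring
        rw [hmid, Finset.mul_sum]
        rw [Finset.sum_eq_zero]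
        · ring
        · intro i hi
          rw [Finset.mem_range] at hi
          exact hterm i (by omega) (hboth i (by omega))
      · have hk' : k = 2*m+1 := by omega
        rw [catalan_succ_range, hk']
        rw [pair_odd _ m (by rw [← hk']; exact hsym)]
        rw [← hk']
        push_cast
        rw [Finset.mul_sum, Finset.sum_eq_zero]
        intro i hi
        rw [Finset.mem_range] at hi
        exact hterm i (by omega) (hboth i (by omega))

private lemma cat8 {a : ℕ} (ha : 2 ≤ a) : (catalan (2^a - 1) : ZMod 8) = 5 := by
  have hp2 : 2^(a-2) * 2 = 2^(a-1) := by rw [← pow_succ, show a-2+1 = a-1 by omega]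
  have hp1 : 2^(a-1) * 2 = 2^a := by rw [← pow_succ, show a-1+1 = a by omega]
  have h2a2 : 1 ≤ 2^(a-2) := Nat.one_le_two_pow
  set m := 2^(a-1) - 1 with hmdef
  have hm1 : m + 1 = 2^(a-1) := by
    have : 1 ≤ 2^(a-1) := Nat.one_le_two_pow
    omega
  set k := 2*m with hk
  set i₀ := 2^(a-2) - 1 with hi₀def
  have hi₀1 : i₀ + 1 = 2^(a-2) := by omega
  have hi₀m : i₀ < m := by omega
  have hn : 2^a - 1 = k + 1 := by omega
  have hsym : ∀ i ≤ k, catalan i * catalan (k - i)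
      = catalan (k - i) * catalan (k - (k - i)) := by
    intro i hi
    rw [show k - (k - i) = i by omega, mul_comm]
  have hsum : catalan (2^a - 1)
      = 2 * (∑ i ∈ Finset.range m, catalan i * catalan (k - i)) + catalan m * catalan m := by
    rw [hn, catalan_succ_range, hk, pair_even _ m (by rw [← hk]; exact hsym), ← hk,
      show k - m = m by omega]
  -- the inner sum is ≡ 2 mod 4
  set S := ∑ i ∈ Finset.range m, catalan i * catalan (k - i) with hSdef
  have hS4 : (S : ZMod 4) = 2 := by
    rw [hSdef]
    push_cast
    rw [Finset.sum_eq_single_of_mem i₀ (Finset.mem_range.mpr hi₀m)]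
    · have h1 : (catalan i₀ : ZMod 4) = 1 := (cat4 i₀).1 ⟨a-2, hi₀1⟩
      have h2 : (catalan (k - i₀) : ZMod 4) = 2 :=
        (cat4 (k - i₀)).2.1 ⟨a-2, a-1, by omega, by omega⟩
      rw [h1, h2, one_mul]
    · intro i hi hne
      rw [Finset.mem_range] at hi
      by_cases hpj2 : ∃ c d, c < d ∧ (k - i) + 1 = 2^c + 2^d
      · have h2 : (catalan (k - i) : ZMod 4) = 2 := (cat4 (k - i)).2.1 hpj2
        have hnp1 : ¬ ∃ b, i + 1 = 2^b := by
          rintro ⟨b, hb⟩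
          obtain ⟨c, d, hcd, hj⟩ := hpj2
          have hsum3 : 2^b + 2^c + 2^d = 2^a := by omega
          obtain ⟨hbc, hdc, hac⟩ := E3 hcd hsum3
          rw [hbc] at hb
          rw [show a - 2 = c by omega] at hi₀1
          exact hne (by omega)
        by_cases hpi2 : ∃ c d, c < d ∧ i + 1 = 2^c + 2^d
        · rw [h2, (cat4 i).2.1 hpi2]; decide
        · rw [h2, (cat4 i).2.2 hnp1 hpi2, zero_mul]
      · have hnp1j : ¬ ∃ c, (k - i) + 1 = 2^c := by
          rintro ⟨c, hc⟩
          apply no_pow_between (k := a - 1) (b := c)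
          · omega
          · rw [show a - 1 + 1 = a by omega]
            omega
        rw [(cat4 (k - i)).2.2 hnp1j hpj2, mul_zero]
  -- convert : S % 4 = 2
  have hS4' : S % 4 = 2 := by
    have := (ZMod.natCast_eq_natCast_iff' S 2 4).mp (by rw [hS4]; norm_num)
    simpa using this
  -- catalan m is odd, so its square is ≡ 1 mod 8
  have hmodd : catalan m % 4 = 1 := by
    have h1 : (catalan m : ZMod 4) = 1 := (cat4 m).1 ⟨a-1, hm1⟩
    have := (ZMod.natCast_eq_natCast_iff' (catalan m) 1 4).mp (by rw [h1]; norm_num)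
    simpa using this
  obtain ⟨u, hu⟩ : ∃ u, catalan m = 2*u + 1 := ⟨catalan m / 2, by omega⟩
  obtain ⟨v, hv⟩ : ∃ v, u * (u+1) = 2*v := (Nat.even_mul_succ_self u).elim (fun v hv => ⟨v, by omega⟩)
  have hsq : catalan m * catalan m = 8*v + 1 := by
    rw [hu]; ring_nf; nlinarith [hv]
  obtain ⟨t, ht⟩ : ∃ t, S = 4*t + 2 := ⟨S / 4, by omega⟩
  rw [hsum, hsq, ht]
  push_cast
  ring_nf
  have h8 : (8 : ZMod 8) = 0 := by decide
  rw [h8]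
  ring

/-- For `n ≥ 2`, the Catalan number `C(n)` is not congruent to `1` modulo `8`. -/
theorem catalan_not_one_mod_eight (n : ℕ) (hn : 2 ≤ n) : ¬ (catalan n ≡ 1 [MOD 8]) := by
  intro h
  have h8 : catalan n % 8 = 1 % 8 := h
  have hodd : catalan n % 2 = 1 := by omega
  by_cases hp1 : ∃ a, n + 1 = 2^a
  · obtain ⟨a, ha⟩ := hp1
    have ha2 : 2 ≤ a := by
      by_contra hcon
      have : a = 0 ∨ a = 1 := by omega
      rcases this with rfl | rfl
      · rw [pow_zero] at ha; omega
      · rw [pow_one] at ha; omega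
    have h5 : (catalan n : ZMod 8) = 5 := by
      rw [show n = 2^a - 1 by omega]
      exact cat8 ha2
    have h1 : (catalan n : ZMod 8) = ((1 : ℕ) : ZMod 8) :=
      (ZMod.natCast_eq_natCast_iff' (catalan n) 1 8).mpr (by omega)
    rw [h5] at h1
    exact absurd h1 (by decide)
  · have heven : catalan n % 2 = 0 := by
      by_cases hp2 : ∃ a b, a < b ∧ n + 1 = 2^a + 2^b
      · have h2 : (catalan n : ZMod 4) = ((2 : ℕ) : ZMod 4) := by
          rw [(cat4 n).2.1 hp2]; norm_num
        have := (ZMod.natCast_eq_natCast_iff' (catalan n) 2 4).mp h2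
        omega
      · have h0 : (catalan n : ZMod 4) = ((0 : ℕ) : ZMod 4) := by
          rw [(cat4 n).2.2 hp1 hp2]; norm_num
        have := (ZMod.natCast_eq_natCast_iff' (catalan n) 0 4).mp h0
        omega
    omega
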